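/- Under the unique-optimum assumption, the geometric condition number Φ̂ := liminf_{δ→0⁺} D_δ/r_δ satisfies Φ ≤ Φ̂ ≤ 2Φ. -/

import Mathlib

open Matrix
open scoped BigOperators

noncomputable section

namespace LPPaper

/-- Euclidean norm of a finite real vector. -/
def enorm {k : ℕ} (v : Fin k → ℝ) : ℝ := Real.sqrt (∑ i, (v i) ^ 2)

/-- ℓ₁ norm of a finite real vector. -/
def l1 {k : ℕ} (v : Fin k → ℝ) : ℝ := ∑ i, |v i|

/-- Spectral norm (operator 2-norm w.r.t. Euclidean norms) of a real matrix. -/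
def specNorm {α β : Type*} [Fintype α] [Fintype β] [DecidableEq β] (M : Matrix α β ℝ) : ℝ :=
  ‖LinearMap.toContinuousLinearMap (Matrix.toEuclideanLin M)‖

variable {m n : ℕ}

/-- Embedding of basic indices (the first `m` coordinates). -/
def bIdx (hmn : m ≤ n) (i : Fin m) : Fin n := Fin.castLE hmn i

/-- Embedding of nonbasic indices (the last `n - m` coordinates). -/
def nIdx (hmn : m ≤ n) (j : Fin (n - m)) : Fin n := ⟨m + j.val, by have := j.isLt; omega⟩

/-- The basis matrix `B`: the first `m` columns of `A`. -/
def Bmat (hmn : m ≤ n) (A : Matrix (Fin m) (Fin n) ℝ) : Matrix (Fin m) (Fin m) ℝ :=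
  Matrix.of fun i j => A i (bIdx hmn j)

/-- The nonbasic matrix `N`: the last `n - m` columns of `A`. -/
def Nmat (hmn : m ≤ n) (A : Matrix (Fin m) (Fin n) ℝ) : Matrix (Fin m) (Fin (n - m)) ℝ :=
  Matrix.of fun i j => A i (nIdx hmn j)

/-- The simplex tableau `B⁻¹N` at the optimal basis. -/
def BN (hmn : m ≤ n) (A : Matrix (Fin m) (Fin n) ℝ) : Matrix (Fin m) (Fin (n - m)) ℝ :=
  (Bmat hmn A)⁻¹ * Nmat hmn A

/-- `q := Aᵀ(AAᵀ)⁻¹ b`. -/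
def qvec (A : Matrix (Fin m) (Fin n) ℝ) (b : Fin m → ℝ) : Fin n → ℝ :=
  Aᵀ *ᵥ ((A * Aᵀ)⁻¹ *ᵥ b)

/-- Primal feasibility: `Ax = b`, `x ≥ 0`. -/
def PrimalFeasible (A : Matrix (Fin m) (Fin n) ℝ) (b : Fin m → ℝ) (x : Fin n → ℝ) : Prop :=
  A *ᵥ x = b ∧ ∀ i, 0 ≤ x i

/-- Dual feasibility: `Aᵀy + s = c`, `s ≥ 0`. -/
def DualFeasible (A : Matrix (Fin m) (Fin n) ℝ) (c : Fin n → ℝ) (y : Fin m → ℝ)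
    (s : Fin n → ℝ) : Prop :=
  Aᵀ *ᵥ y + s = c ∧ ∀ i, 0 ≤ s i

/-- The unique-optimum assumption (Assumption 1 of the paper), with the optimal basis being
(after a permutation of the variables) the set of the first `m` indices: the rows of `A` are
linearly independent, `x*` is the unique primal optimal solution, `(y*, s*)` the unique dual
optimal solution, the basis matrix `B` is invertible, `x*ᵢ > 0` exactly for the first `m`
indices and `s*ᵢ > 0` exactly for the remaining indices. -/
structure UniqueOpt (hmn : m ≤ n) (A : Matrix (Fin m) (Fin n) ℝ) (b : Fin m → ℝ)
    (c : Fin n → ℝ) (xstar : Fin n → ℝ) (ystar : Fin m → ℝ) (sstar : Fin n → ℝ) : Prop where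
  rows_indep : LinearIndependent ℝ (fun i => A i)
  primal_feas : PrimalFeasible A b xstar
  primal_opt : ∀ x, PrimalFeasible A b x → c ⬝ᵥ xstar ≤ c ⬝ᵥ x
  primal_uniq : ∀ x, PrimalFeasible A b x → c ⬝ᵥ x = c ⬝ᵥ xstar → x = xstar
  dual_feas : DualFeasible A c ystar sstar
  dual_opt : ∀ y s, DualFeasible A c y s → b ⬝ᵥ y ≤ b ⬝ᵥ ystar
  dual_uniq : ∀ y s, DualFeasible A c y s → b ⬝ᵥ y = b ⬝ᵥ ystar → y = ystar ∧ s = sstar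
  basis_isUnit : IsUnit (Bmat hmn A).det
  xstar_supp : ∀ i : Fin n, 0 < xstar i ↔ (i : ℕ) < m
  sstar_supp : ∀ i : Fin n, 0 < sstar i ↔ m ≤ (i : ℕ)

/-- The `max` factor appearing in the geometric condition number `Φ`. -/
def PhiFactor (hmn : m ≤ n) (A : Matrix (Fin m) (Fin n) ℝ) (xstar sstar : Fin n → ℝ) : ℝ :=
  max (⨆ j : Fin (n - m),
        Real.sqrt ((∑ i, (BN hmn A i j) ^ 2) + 1) / sstar (nIdx hmn j))
      (⨆ i : Fin m,
        Real.sqrt ((∑ j, (BN hmn A i j) ^ 2) + 1) / xstar (bIdx hmn i))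

/-- The geometric condition number `Φ`. -/
def Phi (hmn : m ≤ n) (A : Matrix (Fin m) (Fin n) ℝ) (xstar sstar : Fin n → ℝ) : ℝ :=
  (l1 xstar + l1 sstar) * PhiFactor hmn A xstar sstar


/-- Slack-form dual feasibility: `s ∈ c + Im(Aᵀ)` and `s ≥ 0`. -/
def SlackFeasible (A : Matrix (Fin m) (Fin n) ℝ) (c : Fin n → ℝ) (s : Fin n → ℝ) : Prop :=
  (∃ y, s = c + Aᵀ *ᵥ y) ∧ ∀ i, 0 ≤ s i

/-- The duality gap `Gap(x,s) = cᵀx - qᵀ(c - s)`. -/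
def Gap (A : Matrix (Fin m) (Fin n) ℝ) (b : Fin m → ℝ) (c : Fin n → ℝ)
    (x s : Fin n → ℝ) : ℝ :=
  c ⬝ᵥ x - qvec A b ⬝ᵥ (c - s)

/-- The `δ`-sublevel set `W_δ ⊆ ℝⁿ × ℝⁿ` of primal-dual feasible pairs with gap at most `δ`. -/
def Wlev (A : Matrix (Fin m) (Fin n) ℝ) (b : Fin m → ℝ) (c : Fin n → ℝ) (δ : ℝ) :
    Set ((Fin n → ℝ) × (Fin n → ℝ)) :=
  {w | PrimalFeasible A b w.1 ∧ SlackFeasible A c w.2 ∧ Gap A b c w.1 w.2 ≤ δ}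

/-- Euclidean norm on `ℝⁿ × ℝⁿ ≅ ℝ²ⁿ`. -/
def pairNorm (w : (Fin n → ℝ) × (Fin n → ℝ)) : ℝ :=
  Real.sqrt ((∑ i, (w.1 i) ^ 2) + ∑ i, (w.2 i) ^ 2)

/-- The diameter `D_δ` of the sublevel set `W_δ`. -/
def Ddiam (A : Matrix (Fin m) (Fin n) ℝ) (b : Fin m → ℝ) (c : Fin n → ℝ) (δ : ℝ) : ℝ :=
  sSup {d | ∃ u ∈ Wlev A b c δ, ∃ v ∈ Wlev A b c δ, d = pairNorm (u - v)}

/-- The conic radius `r_δ` of the sublevel set `W_δ` (`min` over all `2n` coordinates). -/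
def rrad (A : Matrix (Fin m) (Fin n) ℝ) (b : Fin m → ℝ) (c : Fin n → ℝ) (δ : ℝ) : ℝ :=
  sSup {t | ∃ w ∈ Wlev A b c δ, t = min (⨅ i, w.1 i) (⨅ i, w.2 i)}

/-- The geometric condition number `Φ̂ := liminf_{δ → 0⁺} D_δ / r_δ`. -/
def PhiHat (A : Matrix (Fin m) (Fin n) ℝ) (b : Fin m → ℝ) (c : Fin n → ℝ) : ℝ :=
  Filter.liminf (fun δ => Ddiam A b c δ / rrad A b c δ) (nhdsWithin 0 (Set.Ioi (0:ℝ)))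

variable {m n : ℕ}

/-! ### Index bookkeeping -/

lemma nIdx_not_lt (hmn : m ≤ n) (j : Fin (n - m)) : ¬ ((nIdx hmn j : Fin n) : ℕ) < m := by
  simp [nIdx]

/-- Split a sum over `Fin n` into basic and nonbasic parts. -/
lemma sum_split (hmn : m ≤ n) (f : Fin n → ℝ) :
    ∑ k, f k = ∑ i : Fin m, f (bIdx hmn i) + ∑ j : Fin (n - m), f (nIdx hmn j) := by
  have h : m + (n - m) = n := Nat.add_sub_cancel' hmn
  rw [← (finCongr h).sum_comp f, Fin.sum_univ_add]
  rfl

/-- Glue a basic vector and a nonbasic vector into a vector on `Fin n`. -/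
def glue (hmn : m ≤ n) (u : Fin m → ℝ) (v : Fin (n - m) → ℝ) : Fin n → ℝ :=
  fun k => if hk : (k : ℕ) < m then u ⟨k, hk⟩ else v ⟨(k : ℕ) - m, by omega⟩

lemma glue_bIdx (hmn : m ≤ n) (u : Fin m → ℝ) (v : Fin (n - m) → ℝ) (i : Fin m) :
    glue hmn u v (bIdx hmn i) = u i := by
  simp [glue, bIdx, Fin.castLE]

lemma glue_nIdx (hmn : m ≤ n) (u : Fin m → ℝ) (v : Fin (n - m) → ℝ) (j : Fin (n - m)) :
    glue hmn u v (nIdx hmn j) = v j := by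
  have h1 : ¬ (m + (j : ℕ) < m) := by omega
  have h2 : (⟨m + (j : ℕ) - m, by omega⟩ : Fin (n - m)) = j := by
    apply Fin.ext; simp
  simp only [glue, nIdx, h1, dif_neg, not_false_iff]
  exact (dif_neg h1).trans (congrArg v h2)

lemma glue_eq_self (hmn : m ≤ n) (x : Fin n → ℝ) :
    glue hmn (fun i => x (bIdx hmn i)) (fun j => x (nIdx hmn j)) = x := by
  funext k
  by_cases hk : (k : ℕ) < m
  · simp only [glue, dif_pos hk, bIdx]
    congr 1
  · simp only [glue, dif_neg hk, nIdx]
    congr 1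
    apply Fin.ext
    simp
    omega

/-! ### Matrix algebra -/

lemma mulVec_split (hmn : m ≤ n) (A : Matrix (Fin m) (Fin n) ℝ) (x : Fin n → ℝ) :
    A *ᵥ x = Bmat hmn A *ᵥ (fun i => x (bIdx hmn i)) + Nmat hmn A *ᵥ (fun j => x (nIdx hmn j)) := by
  funext i
  simp only [Matrix.mulVec, dotProduct, Pi.add_apply]
  rw [sum_split hmn (fun k => A i k * x k)]
  rfl

lemma dot_split (hmn : m ≤ n) (u v : Fin n → ℝ) :
    u ⬝ᵥ v = (fun i => u (bIdx hmn i)) ⬝ᵥ (fun i => v (bIdx hmn i))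
      + (fun j => u (nIdx hmn j)) ⬝ᵥ (fun j => v (nIdx hmn j)) :=
  sum_split hmn (fun k => u k * v k)

lemma isUnit_AAT {A : Matrix (Fin m) (Fin n) ℝ}
    (hA : LinearIndependent ℝ (fun i => A i)) : IsUnit (A * Aᵀ) := by
  rw [← Matrix.mulVec_injective_iff_isUnit]
  have key : ∀ y, (A * Aᵀ) *ᵥ y = 0 → y = 0 := by
    intro y hy
    have h0 : y ⬝ᵥ ((A * Aᵀ) *ᵥ y) = 0 := by rw [hy, dotProduct_zero]
    have h1 : (Aᵀ *ᵥ y) ⬝ᵥ (Aᵀ *ᵥ y) = 0 := by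
      rw [← h0, ← Matrix.mulVec_mulVec, Matrix.dotProduct_mulVec y A (Aᵀ *ᵥ y)]
      congr 1
      rw [← Matrix.mulVec_transpose]
    have h2 : Aᵀ *ᵥ y = 0 := dotProduct_self_eq_zero.mp h1
    have h3 : ∑ i, y i • A i = 0 := by
      funext j
      have := congrFun h2 j
      simpa [Matrix.mulVec, dotProduct, mul_comm] using this
    exact funext (Fintype.linearIndependent_iff.mp hA y h3)
  intro u v huv
  have : (A * Aᵀ) *ᵥ (u - v) = 0 := by
    rw [Matrix.mulVec_sub, huv, sub_self]
  have := key _ this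
  exact sub_eq_zero.mp this

lemma mulVec_qvec {A : Matrix (Fin m) (Fin n) ℝ}
    (hA : LinearIndependent ℝ (fun i => A i)) (b : Fin m → ℝ) :
    A *ᵥ qvec A b = b := by
  have hu : IsUnit (A * Aᵀ) := isUnit_AAT hA
  have hdet : IsUnit (A * Aᵀ).det := (Matrix.isUnit_iff_isUnit_det _).mp hu
  unfold qvec
  rw [Matrix.mulVec_mulVec, Matrix.mulVec_mulVec, Matrix.mul_nonsing_inv _ hdet,
    Matrix.one_mulVec]

lemma dot_transpose_mulVec (A : Matrix (Fin m) (Fin n) ℝ) (x : Fin n → ℝ) (y : Fin m → ℝ) :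
    x ⬝ᵥ (Aᵀ *ᵥ y) = (A *ᵥ x) ⬝ᵥ y := by
  rw [Matrix.dotProduct_mulVec, Matrix.vecMul_transpose]

lemma gap_eq {A : Matrix (Fin m) (Fin n) ℝ} {b : Fin m → ℝ} {c : Fin n → ℝ}
    (hA : LinearIndependent ℝ (fun i => A i)) {x s : Fin n → ℝ}
    (hx : A *ᵥ x = b) {y : Fin m → ℝ} (hs : s = c + Aᵀ *ᵥ y) :
    Gap A b c x s = x ⬝ᵥ s := by
  subst hs
  unfold Gap
  have h1 : c - (c + Aᵀ *ᵥ y) = -(Aᵀ *ᵥ y) := by abel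
  rw [h1, dotProduct_neg, dot_transpose_mulVec, mulVec_qvec hA,
    dotProduct_add, dot_transpose_mulVec, hx, dotProduct_comm x c]
  ring

lemma four_point {A : Matrix (Fin m) (Fin n) ℝ} {b : Fin m → ℝ} {c : Fin n → ℝ}
    {x x' s s' : Fin n → ℝ} {y y' : Fin m → ℝ}
    (hx : A *ᵥ x = b) (hx' : A *ᵥ x' = b)
    (hs : s = c + Aᵀ *ᵥ y) (hs' : s' = c + Aᵀ *ᵥ y') :
    x ⬝ᵥ s + x' ⬝ᵥ s' = x ⬝ᵥ s' + x' ⬝ᵥ s := by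
  subst hs hs'
  simp only [dotProduct_add, dot_transpose_mulVec, hx, hx']
  ring

/-! ### Consequences of the unique-optimum assumption -/

section UO
variable {hmn : m ≤ n} {A : Matrix (Fin m) (Fin n) ℝ} {b : Fin m → ℝ} {c : Fin n → ℝ}
  {xstar : Fin n → ℝ} {ystar : Fin m → ℝ} {sstar : Fin n → ℝ}

namespace UniqueOpt
variable (h : UniqueOpt hmn A b c xstar ystar sstar)
include h

lemma xstar_nonneg (i : Fin n) : 0 ≤ xstar i := h.primal_feas.2 i
lemma sstar_nonneg (i : Fin n) : 0 ≤ sstar i := h.dual_feas.2 i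

lemma xstar_nIdx (j : Fin (n - m)) : xstar (nIdx hmn j) = 0 :=
  le_antisymm (not_lt.mp fun hc => (nIdx_not_lt hmn j) ((h.xstar_supp _).mp hc))
    (h.xstar_nonneg _)

lemma sstar_bIdx (i : Fin m) : sstar (bIdx hmn i) = 0 :=
  le_antisymm (not_lt.mp fun hc => absurd ((h.sstar_supp _).mp hc)
    (by simpa [bIdx] using i.isLt.not_le)) (h.sstar_nonneg _)

lemma xstar_bIdx_pos (i : Fin m) : 0 < xstar (bIdx hmn i) :=
  (h.xstar_supp _).mpr (by simpa [bIdx] using i.isLt)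

lemma sstar_nIdx_pos (j : Fin (n - m)) : 0 < sstar (nIdx hmn j) :=
  (h.sstar_supp _).mpr (by simp [nIdx])

lemma comp : xstar ⬝ᵥ sstar = 0 := by
  rw [dot_split hmn]
  have h1 : ∀ i : Fin m, xstar (bIdx hmn i) * sstar (bIdx hmn i) = 0 := fun i => by
    rw [h.sstar_bIdx, mul_zero]
  have h2 : ∀ j : Fin (n - m), xstar (nIdx hmn j) * sstar (nIdx hmn j) = 0 := fun j => by
    rw [h.xstar_nIdx, zero_mul]
  simp only [dotProduct]
  rw [Finset.sum_congr rfl fun i _ => h1 i, Finset.sum_congr rfl fun j _ => h2 j]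
  simp

lemma sstar_rep : sstar = c + Aᵀ *ᵥ (-ystar) := by
  have := h.dual_feas.1
  rw [Matrix.mulVec_neg]
  funext k
  have := congrFun this k
  simp only [Pi.add_apply, Pi.neg_apply] at this ⊢
  linarith

lemma sstar_slack : SlackFeasible A c sstar := ⟨⟨-ystar, h.sstar_rep⟩, h.dual_feas.2⟩

/-- For a feasible pair, the duality gap splits as `x⬝s* + x*⬝s`. -/
lemma dot_star_split {x s : Fin n → ℝ} (hx : A *ᵥ x = b) {y : Fin m → ℝ}
    (hs : s = c + Aᵀ *ᵥ y) : x ⬝ᵥ s = x ⬝ᵥ sstar + xstar ⬝ᵥ s := by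
  have h4 := four_point hx h.primal_feas.1 hs h.sstar_rep
  rw [h.comp] at h4
  linarith

lemma B_isUnit : IsUnit (Bmat hmn A) := (Matrix.isUnit_iff_isUnit_det _).mpr h.basis_isUnit

lemma Binv_B : (Bmat hmn A)⁻¹ * Bmat hmn A = 1 := Matrix.nonsing_inv_mul _ h.basis_isUnit
lemma B_Binv : Bmat hmn A * (Bmat hmn A)⁻¹ = 1 := Matrix.mul_nonsing_inv _ h.basis_isUnit

/-- Basic components of a primal-feasible point. -/
lemma primal_rep {x : Fin n → ℝ} (hx : A *ᵥ x = b) :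
    (fun i => x (bIdx hmn i)) = (fun i => xstar (bIdx hmn i))
      - BN hmn A *ᵥ (fun j => x (nIdx hmn j)) := by
  have e1 := mulVec_split hmn A x
  have e2 := mulVec_split hmn A xstar
  have hxN : (fun j => xstar (nIdx hmn j)) = (0 : Fin (n - m) → ℝ) :=
    funext fun j => h.xstar_nIdx j
  rw [hxN, Matrix.mulVec_zero, add_zero] at e2
  have e0 : (Bmat hmn A *ᵥ fun i => x (bIdx hmn i))
      + Nmat hmn A *ᵥ (fun j => x (nIdx hmn j))
      = Bmat hmn A *ᵥ fun i => xstar (bIdx hmn i) := by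
    rw [← e1, ← e2, hx, h.primal_feas.1]
  have e3 : Bmat hmn A *ᵥ (fun i => x (bIdx hmn i))
      = Bmat hmn A *ᵥ (fun i => xstar (bIdx hmn i))
        - Nmat hmn A *ᵥ (fun j => x (nIdx hmn j)) := by
    rw [← e0]; abel
  have e4 := congrArg (fun v => (Bmat hmn A)⁻¹ *ᵥ v) e3
  simpa [Matrix.mulVec_sub, Matrix.mulVec_mulVec, h.Binv_B, Matrix.one_mulVec, BN] using e4

omit h in
lemma transpose_mulVec_bIdx (z : Fin m → ℝ) :
    (fun i => (Aᵀ *ᵥ z) (bIdx hmn i)) = (Bmat hmn A)ᵀ *ᵥ z := rfl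

omit h in
lemma transpose_mulVec_nIdx (z : Fin m → ℝ) :
    (fun j => (Aᵀ *ᵥ z) (nIdx hmn j)) = (Nmat hmn A)ᵀ *ᵥ z := rfl

lemma BT_isUnit_det : IsUnit (Bmat hmn A)ᵀ.det := by
  rw [Matrix.det_transpose]; exact h.basis_isUnit

/-- Nonbasic components of a slack-feasible point. -/
lemma dual_rep {s : Fin n → ℝ} {y : Fin m → ℝ} (hs : s = c + Aᵀ *ᵥ y) :
    (fun j => s (nIdx hmn j)) = (fun j => sstar (nIdx hmn j))
      + (BN hmn A)ᵀ *ᵥ (fun i => s (bIdx hmn i)) := by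
  set z : Fin m → ℝ := y + ystar with hz
  have hdiff : s - sstar = Aᵀ *ᵥ z := by
    rw [hs, h.sstar_rep, hz, Matrix.mulVec_add, Matrix.mulVec_neg]; abel
  have hB : (fun i => s (bIdx hmn i)) = (Bmat hmn A)ᵀ *ᵥ z := by
    funext i
    have := congrFun hdiff (bIdx hmn i)
    have h0 := h.sstar_bIdx i
    have h2 := congrFun (transpose_mulVec_bIdx (hmn := hmn) (A := A) z) i
    simp only [Pi.sub_apply] at this
    rw [← h2, ← this, h0, sub_zero]
  have hzval : z = ((Bmat hmn A)ᵀ)⁻¹ *ᵥ (fun i => s (bIdx hmn i)) := by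
    rw [hB, Matrix.mulVec_mulVec, Matrix.nonsing_inv_mul _ h.BT_isUnit_det, Matrix.one_mulVec]
  have hN : (fun j => s (nIdx hmn j)) - (fun j => sstar (nIdx hmn j))
      = (Nmat hmn A)ᵀ *ᵥ z := by
    funext j
    have := congrFun hdiff (nIdx hmn j)
    have h2 := congrFun (transpose_mulVec_nIdx (hmn := hmn) (A := A) z) j
    simp only [Pi.sub_apply] at this ⊢
    rw [← h2, ← this]
  have hBN : (BN hmn A)ᵀ = (Nmat hmn A)ᵀ * ((Bmat hmn A)ᵀ)⁻¹ := by
    rw [BN, Matrix.transpose_mul, Matrix.transpose_nonsing_inv]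
  have : (fun j => s (nIdx hmn j)) - (fun j => sstar (nIdx hmn j))
      = (BN hmn A)ᵀ *ᵥ (fun i => s (bIdx hmn i)) := by
    rw [hN, hzval, hBN, Matrix.mulVec_mulVec]
  rw [← this]; abel

end UniqueOpt
end UO

/-! ### Norm machinery -/

lemma enorm_nonneg {k : ℕ} (v : Fin k → ℝ) : 0 ≤ enorm v := Real.sqrt_nonneg _

lemma enorm_eq_norm {k : ℕ} (v : Fin k → ℝ) :
    enorm v = ‖(WithLp.equiv 2 (Fin k → ℝ)).symm v‖ := by
  rw [EuclideanSpace.norm_eq, enorm]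
  congr 1
  refine Finset.sum_congr rfl fun i _ => ?_
  rw [show ((WithLp.equiv 2 (Fin k → ℝ)).symm v).ofLp i = v i from rfl, Real.norm_eq_abs, sq_abs]

lemma enorm_sum_le {k : ℕ} {ι : Type*} (s : Finset ι) (f : ι → Fin k → ℝ) :
    enorm (∑ j ∈ s, f j) ≤ ∑ j ∈ s, enorm (f j) := by
  simp only [enorm_eq_norm]
  have : (WithLp.equiv 2 (Fin k → ℝ)).symm (∑ j ∈ s, f j)
      = ∑ j ∈ s, (WithLp.equiv 2 (Fin k → ℝ)).symm (f j) :=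
    map_sum (WithLp.linearEquiv 2 ℝ (Fin k → ℝ)).symm f s
  rw [this]
  exact norm_sum_le _ _

lemma enorm_smul {k : ℕ} (a : ℝ) (v : Fin k → ℝ) : enorm (a • v) = |a| * enorm v := by
  simp only [enorm_eq_norm]
  have : (WithLp.equiv 2 (Fin k → ℝ)).symm (a • v)
      = a • (WithLp.equiv 2 (Fin k → ℝ)).symm v :=
    map_smul (WithLp.linearEquiv 2 ℝ (Fin k → ℝ)).symm a v
  rw [this, norm_smul, Real.norm_eq_abs]

/-- Embed a pair into Euclidean space on `Fin n ⊕ Fin n`. -/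
def pairEmb (w : (Fin n → ℝ) × (Fin n → ℝ)) : EuclideanSpace ℝ (Fin n ⊕ Fin n) :=
  (WithLp.equiv 2 (Fin n ⊕ Fin n → ℝ)).symm (Sum.elim w.1 w.2)

lemma pairNorm_eq (w : (Fin n → ℝ) × (Fin n → ℝ)) : pairNorm w = ‖pairEmb w‖ := by
  rw [EuclideanSpace.norm_eq, pairNorm]
  congr 1
  rw [Fintype.sum_sum_type]
  congr 1 <;> refine Finset.sum_congr rfl fun i _ => ?_ <;>
    simp [pairEmb, WithLp.equiv_symm_apply, PiLp.toLp_apply, sq_abs]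

lemma pairEmb_sub (u v : (Fin n → ℝ) × (Fin n → ℝ)) :
    pairEmb (u - v) = pairEmb u - pairEmb v := by
  have hel : Sum.elim (u - v).1 (u - v).2
      = Sum.elim u.1 u.2 - Sum.elim v.1 v.2 := by
    funext k; cases k <;> rfl
  rw [pairEmb, hel]
  exact map_sub (WithLp.linearEquiv 2 ℝ (Fin n ⊕ Fin n → ℝ)).symm _ _

lemma pairNorm_nonneg (w : (Fin n → ℝ) × (Fin n → ℝ)) : 0 ≤ pairNorm w :=
  Real.sqrt_nonneg _

lemma pairNorm_triangle (u v w : (Fin n → ℝ) × (Fin n → ℝ)) :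
    pairNorm (u - v) ≤ pairNorm (u - w) + pairNorm (w - v) := by
  simp only [pairNorm_eq, pairEmb_sub]
  exact norm_sub_le_norm_sub_add_norm_sub _ _ _

lemma pairNorm_le_add (w : (Fin n → ℝ) × (Fin n → ℝ)) :
    pairNorm w ≤ enorm w.1 + enorm w.2 := by
  have h1 : (0:ℝ) ≤ ∑ i, (w.1 i) ^ 2 := Finset.sum_nonneg fun i _ => sq_nonneg _
  have h2 : (0:ℝ) ≤ ∑ i, (w.2 i) ^ 2 := Finset.sum_nonneg fun i _ => sq_nonneg _
  have e1 : enorm w.1 ^ 2 = ∑ i, (w.1 i) ^ 2 := Real.sq_sqrt h1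
  have e2 : enorm w.2 ^ 2 = ∑ i, (w.2 i) ^ 2 := Real.sq_sqrt h2
  have hle : (∑ i, (w.1 i) ^ 2) + ∑ i, (w.2 i) ^ 2 ≤ (enorm w.1 + enorm w.2) ^ 2 := by
    have hcross : 0 ≤ 2 * (enorm w.1 * enorm w.2) :=
      mul_nonneg (by norm_num) (mul_nonneg (enorm_nonneg _) (enorm_nonneg _))
    nlinarith [e1, e2]
  calc pairNorm w = Real.sqrt ((∑ i, (w.1 i) ^ 2) + ∑ i, (w.2 i) ^ 2) := rfl
    _ ≤ Real.sqrt ((enorm w.1 + enorm w.2) ^ 2) := Real.sqrt_le_sqrt hle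
    _ = enorm w.1 + enorm w.2 :=
        Real.sqrt_sq (add_nonneg (enorm_nonneg _) (enorm_nonneg _))

lemma pairNorm_fst (x : Fin n → ℝ) : pairNorm ((x, (0 : Fin n → ℝ))) = enorm x := by
  simp [pairNorm, enorm]

lemma pairNorm_snd (s : Fin n → ℝ) : pairNorm (((0 : Fin n → ℝ), s)) = enorm s := by
  simp [pairNorm, enorm]

/-! ### Distance bounds -/

lemma eq_of_parts {hmn : m ≤ n} (f g : Fin n → ℝ)
    (hb : ∀ i, f (bIdx hmn i) = g (bIdx hmn i))
    (hn : ∀ j, f (nIdx hmn j) = g (nIdx hmn j)) : f = g := by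
  funext k
  by_cases hk : (k : ℕ) < m
  · have : bIdx hmn ⟨(k : ℕ), hk⟩ = k := by apply Fin.ext; rfl
    rw [← this]; exact hb _
  · have hk2 : (k : ℕ) - m < n - m := by omega
    have : nIdx hmn ⟨(k : ℕ) - m, hk2⟩ = k := by apply Fin.ext; simp [nIdx]; omega
    rw [← this]; exact hn _

section DistBound

variable {hmn : m ≤ n} {A : Matrix (Fin m) (Fin n) ℝ} {b : Fin m → ℝ} {c : Fin n → ℝ}
  {xstar : Fin n → ℝ} {ystar : Fin m → ℝ} {sstar : Fin n → ℝ}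

/-- The vector by which a unit of the `j`-th nonbasic variable moves a primal point. -/
def uvec (hmn : m ≤ n) (A : Matrix (Fin m) (Fin n) ℝ) (j : Fin (n - m)) : Fin n → ℝ :=
  glue hmn (fun i => -(BN hmn A i j)) (fun j' => if j' = j then 1 else 0)

lemma enorm_uvec (j : Fin (n - m)) :
    enorm (uvec hmn A j) = Real.sqrt ((∑ i, (BN hmn A i j) ^ 2) + 1) := by
  rw [enorm, sum_split hmn (fun k => (uvec hmn A j k) ^ 2)]
  congr 1
  congr 1
  · exact Finset.sum_congr rfl fun i _ => by rw [uvec, glue_bIdx]; ring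
  · have : ∀ j' : Fin (n - m), (uvec hmn A j (nIdx hmn j')) ^ 2
        = if j' = j then 1 else 0 := by
      intro j'
      rw [uvec, glue_nIdx]
      by_cases hj : j' = j <;> simp [hj]
    rw [Finset.sum_congr rfl fun j' _ => this j']
    simp

/-- The vector by which a unit of the `i`-th basic slack moves a dual point. -/
def vvec (hmn : m ≤ n) (A : Matrix (Fin m) (Fin n) ℝ) (i : Fin m) : Fin n → ℝ :=
  glue hmn (fun i' => if i' = i then 1 else 0) (fun j => BN hmn A i j)

lemma enorm_vvec (i : Fin m) :
    enorm (vvec hmn A i) = Real.sqrt ((∑ j, (BN hmn A i j) ^ 2) + 1) := by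
  rw [enorm, sum_split hmn (fun k => (vvec hmn A i k) ^ 2)]
  rw [add_comm ((∑ j, (BN hmn A i j) ^ 2)) 1]
  congr 1
  congr 1
  · have : ∀ i' : Fin m, (vvec hmn A i (bIdx hmn i')) ^ 2
        = if i' = i then 1 else 0 := by
      intro i'
      rw [vvec, glue_bIdx]
      by_cases hi : i' = i <;> simp [hi]
    rw [Finset.sum_congr rfl fun i' _ => this i']
    simp
  · exact Finset.sum_congr rfl fun j _ => by rw [vvec, glue_nIdx]

variable (h : UniqueOpt hmn A b c xstar ystar sstar)
include h

/-- Decomposition of a primal feasible point around `x*`. -/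
lemma primal_decomp {x : Fin n → ℝ} (hx : A *ᵥ x = b) :
    x - xstar = ∑ j, (x (nIdx hmn j)) • uvec hmn A j := by
  have hrep := h.primal_rep hx
  apply eq_of_parts (hmn := hmn)
  · intro i
    have h1 := congrFun hrep i
    simp only [Pi.sub_apply] at h1
    have h2 : (∑ j, (x (nIdx hmn j)) • uvec hmn A j) (bIdx hmn i)
        = ∑ j, x (nIdx hmn j) * (-(BN hmn A i j)) := by
      rw [Finset.sum_apply]
      exact Finset.sum_congr rfl fun j _ => by
        rw [Pi.smul_apply, smul_eq_mul, uvec, glue_bIdx]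
    rw [Pi.sub_apply, h2, h1]
    simp only [Matrix.mulVec, dotProduct]
    rw [sub_sub_cancel_left, ← Finset.sum_neg_distrib]
    exact Finset.sum_congr rfl fun j _ => by ring
  · intro j0
    have h2 : (∑ j, (x (nIdx hmn j)) • uvec hmn A j) (nIdx hmn j0)
        = ∑ j, x (nIdx hmn j) * (if j0 = j then 1 else 0) := by
      rw [Finset.sum_apply]
      exact Finset.sum_congr rfl fun j _ => by
        rw [Pi.smul_apply, smul_eq_mul, uvec, glue_nIdx]
    rw [Pi.sub_apply, h2, h.xstar_nIdx j0, sub_zero]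
    rw [Finset.sum_congr rfl fun j _ => (by rw [mul_ite, mul_one, mul_zero] :
      x (nIdx hmn j) * (if j0 = j then 1 else 0) = if j0 = j then x (nIdx hmn j) else 0)]
    rw [Finset.sum_ite_eq]
    simp

/-- Decomposition of a slack feasible point around `s*`. -/
lemma dual_decomp {s : Fin n → ℝ} {y : Fin m → ℝ} (hs : s = c + Aᵀ *ᵥ y) :
    s - sstar = ∑ i, (s (bIdx hmn i)) • vvec hmn A i := by
  have hrep := h.dual_rep hs
  apply eq_of_parts (hmn := hmn)
  · intro i0
    have h2 : (∑ i, (s (bIdx hmn i)) • vvec hmn A i) (bIdx hmn i0)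
        = ∑ i, s (bIdx hmn i) * (if i0 = i then 1 else 0) := by
      rw [Finset.sum_apply]
      exact Finset.sum_congr rfl fun i _ => by
        rw [Pi.smul_apply, smul_eq_mul, vvec, glue_bIdx]
    rw [Pi.sub_apply, h2, h.sstar_bIdx i0, sub_zero]
    rw [Finset.sum_congr rfl fun i _ => (by rw [mul_ite, mul_one, mul_zero] :
      s (bIdx hmn i) * (if i0 = i then 1 else 0) = if i0 = i then s (bIdx hmn i) else 0)]
    rw [Finset.sum_ite_eq]
    simp
  · intro j
    have h1 := congrFun hrep j
    simp only [Pi.add_apply] at h1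
    have h2 : (∑ i, (s (bIdx hmn i)) • vvec hmn A i) (nIdx hmn j)
        = ∑ i, s (bIdx hmn i) * BN hmn A i j := by
      rw [Finset.sum_apply]
      exact Finset.sum_congr rfl fun i _ => by
        rw [Pi.smul_apply, smul_eq_mul, vvec, glue_nIdx]
    rw [Pi.sub_apply, h2, h1]
    rw [add_sub_cancel_left]
    simp only [Matrix.mulVec, dotProduct, Matrix.transpose_apply]
    exact Finset.sum_congr rfl fun i _ => by ring

end DistBound

section NormBound

variable {hmn : m ≤ n} {A : Matrix (Fin m) (Fin n) ℝ} {b : Fin m → ℝ} {c : Fin n → ℝ}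
  {xstar : Fin n → ℝ} {ystar : Fin m → ℝ} {sstar : Fin n → ℝ}

/-- First sup in `PhiFactor`. -/
def M1 (hmn : m ≤ n) (A : Matrix (Fin m) (Fin n) ℝ) (sstar : Fin n → ℝ) : ℝ :=
  ⨆ j : Fin (n - m), Real.sqrt ((∑ i, (BN hmn A i j) ^ 2) + 1) / sstar (nIdx hmn j)

/-- Second sup in `PhiFactor`. -/
def M2 (hmn : m ≤ n) (A : Matrix (Fin m) (Fin n) ℝ) (xstar : Fin n → ℝ) : ℝ :=
  ⨆ i : Fin m, Real.sqrt ((∑ j, (BN hmn A i j) ^ 2) + 1) / xstar (bIdx hmn i)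

lemma phiFactor_eq : PhiFactor hmn A xstar sstar = max (M1 hmn A sstar) (M2 hmn A xstar) := rfl

variable (h : UniqueOpt hmn A b c xstar ystar sstar)
include h

lemma M1_nonneg : 0 ≤ M1 hmn A sstar :=
  Real.iSup_nonneg fun j => div_nonneg (Real.sqrt_nonneg _) (h.sstar_nIdx_pos j).le

lemma M2_nonneg : 0 ≤ M2 hmn A xstar :=
  Real.iSup_nonneg fun i => div_nonneg (Real.sqrt_nonneg _) (h.xstar_bIdx_pos i).le

lemma phiFactor_nonneg : 0 ≤ PhiFactor hmn A xstar sstar :=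
  le_max_of_le_left (M1_nonneg h)

lemma le_M1 (j : Fin (n - m)) :
    Real.sqrt ((∑ i, (BN hmn A i j) ^ 2) + 1) ≤ M1 hmn A sstar * sstar (nIdx hmn j) := by
  have hle : Real.sqrt ((∑ i, (BN hmn A i j) ^ 2) + 1) / sstar (nIdx hmn j)
      ≤ M1 hmn A sstar := by
    rw [M1]
    exact le_ciSup (f := fun j : Fin (n - m) =>
      Real.sqrt ((∑ i, (BN hmn A i j) ^ 2) + 1) / sstar (nIdx hmn j))
      (Set.Finite.bddAbove (Set.finite_range _)) j
  exact (div_le_iff₀ (h.sstar_nIdx_pos j)).mp hle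

lemma le_M2 (i : Fin m) :
    Real.sqrt ((∑ j, (BN hmn A i j) ^ 2) + 1) ≤ M2 hmn A xstar * xstar (bIdx hmn i) := by
  have hle : Real.sqrt ((∑ j, (BN hmn A i j) ^ 2) + 1) / xstar (bIdx hmn i)
      ≤ M2 hmn A xstar := by
    rw [M2]
    exact le_ciSup (f := fun i : Fin m =>
      Real.sqrt ((∑ j, (BN hmn A i j) ^ 2) + 1) / xstar (bIdx hmn i))
      (Set.Finite.bddAbove (Set.finite_range _)) i
  exact (div_le_iff₀ (h.xstar_bIdx_pos i)).mp hle

lemma dot_sstar_eq {x : Fin n → ℝ} :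
    x ⬝ᵥ sstar = ∑ j, x (nIdx hmn j) * sstar (nIdx hmn j) := by
  rw [dot_split hmn]
  simp only [dotProduct]
  rw [Finset.sum_congr rfl fun i (_ : i ∈ Finset.univ) => by
    rw [h.sstar_bIdx i, mul_zero]]
  simp

lemma xstar_dot_eq {s : Fin n → ℝ} :
    xstar ⬝ᵥ s = ∑ i, xstar (bIdx hmn i) * s (bIdx hmn i) := by
  rw [dot_split hmn]
  simp only [dotProduct]
  rw [Finset.sum_congr (rfl : (Finset.univ : Finset (Fin (n - m))) = _)
    fun j (_ : j ∈ Finset.univ) => by rw [h.xstar_nIdx j, zero_mul]]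
  simp

/-- Distance bound for primal feasible points. -/
lemma primal_dist {x : Fin n → ℝ} (hx : PrimalFeasible A b x) :
    enorm (x - xstar) ≤ M1 hmn A sstar * (x ⬝ᵥ sstar) := by
  calc enorm (x - xstar) = enorm (∑ j, (x (nIdx hmn j)) • uvec hmn A j) := by
        rw [primal_decomp h hx.1]
    _ ≤ ∑ j, enorm ((x (nIdx hmn j)) • uvec hmn A j) := enorm_sum_le _ _
    _ = ∑ j, x (nIdx hmn j) * Real.sqrt ((∑ i, (BN hmn A i j) ^ 2) + 1) := by
        refine Finset.sum_congr rfl fun j _ => ?_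
        rw [enorm_smul, enorm_uvec, abs_of_nonneg (hx.2 _)]
    _ ≤ ∑ j, x (nIdx hmn j) * (M1 hmn A sstar * sstar (nIdx hmn j)) := by
        refine Finset.sum_le_sum fun j _ => ?_
        exact mul_le_mul_of_nonneg_left (le_M1 h j) (hx.2 _)
    _ = M1 hmn A sstar * ∑ j, x (nIdx hmn j) * sstar (nIdx hmn j) := by
        rw [Finset.mul_sum]; exact Finset.sum_congr rfl fun j _ => by ring
    _ = M1 hmn A sstar * (x ⬝ᵥ sstar) := by rw [dot_sstar_eq h]

/-- Distance bound for slack feasible points. -/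
lemma dual_dist {s : Fin n → ℝ} (hs : SlackFeasible A c s) :
    enorm (s - sstar) ≤ M2 hmn A xstar * (xstar ⬝ᵥ s) := by
  obtain ⟨y, hy⟩ := hs.1
  calc enorm (s - sstar) = enorm (∑ i, (s (bIdx hmn i)) • vvec hmn A i) := by
        rw [dual_decomp h hy]
    _ ≤ ∑ i, enorm ((s (bIdx hmn i)) • vvec hmn A i) := enorm_sum_le _ _
    _ = ∑ i, s (bIdx hmn i) * Real.sqrt ((∑ j, (BN hmn A i j) ^ 2) + 1) := by
        refine Finset.sum_congr rfl fun i _ => ?_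
        rw [enorm_smul, enorm_vvec, abs_of_nonneg (hs.2 _)]
    _ ≤ ∑ i, s (bIdx hmn i) * (M2 hmn A xstar * xstar (bIdx hmn i)) := by
        refine Finset.sum_le_sum fun i _ => ?_
        exact mul_le_mul_of_nonneg_left (le_M2 h i) (hs.2 _)
    _ = M2 hmn A xstar * ∑ i, xstar (bIdx hmn i) * s (bIdx hmn i) := by
        rw [Finset.mul_sum]; exact Finset.sum_congr rfl fun i _ => by ring
    _ = M2 hmn A xstar * (xstar ⬝ᵥ s) := by rw [xstar_dot_eq h]

/-- The combined distance-to-optimum bound on the sublevel set. -/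
lemma pair_dist {δ : ℝ} {w : (Fin n → ℝ) × (Fin n → ℝ)} (hw : w ∈ Wlev A b c δ) :
    pairNorm (w - (xstar, sstar)) ≤ PhiFactor hmn A xstar sstar * δ := by
  obtain ⟨hxf, hsf, hgap⟩ := hw
  obtain ⟨y, hy⟩ := hsf.1
  have hgap' : w.1 ⬝ᵥ w.2 ≤ δ := by
    rw [← gap_eq h.rows_indep hxf.1 hy]; exact hgap
  have hsplit := h.dot_star_split hxf.1 hy
  have hX : 0 ≤ w.1 ⬝ᵥ sstar :=
    Finset.sum_nonneg fun i _ => mul_nonneg (hxf.2 i) (h.sstar_nonneg i)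
  have hS : 0 ≤ xstar ⬝ᵥ w.2 :=
    Finset.sum_nonneg fun i _ => mul_nonneg (h.xstar_nonneg i) (hsf.2 i)
  have hXS : w.1 ⬝ᵥ sstar + xstar ⬝ᵥ w.2 ≤ δ := by rw [← hsplit]; exact hgap'
  have h1 : enorm (w.1 - xstar) ≤ M1 hmn A sstar * (w.1 ⬝ᵥ sstar) := primal_dist h hxf
  have h2 : enorm (w.2 - sstar) ≤ M2 hmn A xstar * (xstar ⬝ᵥ w.2) := dual_dist h hsf
  have hF := phiFactor_nonneg h
  calc pairNorm (w - (xstar, sstar))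
      ≤ enorm (w - (xstar, sstar)).1 + enorm (w - (xstar, sstar)).2 := pairNorm_le_add _
    _ = enorm (w.1 - xstar) + enorm (w.2 - sstar) := rfl
    _ ≤ M1 hmn A sstar * (w.1 ⬝ᵥ sstar) + M2 hmn A xstar * (xstar ⬝ᵥ w.2) :=
        add_le_add h1 h2
    _ ≤ PhiFactor hmn A xstar sstar * (w.1 ⬝ᵥ sstar)
        + PhiFactor hmn A xstar sstar * (xstar ⬝ᵥ w.2) := by
        rw [phiFactor_eq]
        exact add_le_add (mul_le_mul_of_nonneg_right (le_max_left _ _) hX)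
          (mul_le_mul_of_nonneg_right (le_max_right _ _) hS)
    _ = PhiFactor hmn A xstar sstar * (w.1 ⬝ᵥ sstar + xstar ⬝ᵥ w.2) := by ring
    _ ≤ PhiFactor hmn A xstar sstar * δ := mul_le_mul_of_nonneg_left hXS hF

end NormBound

section DR

variable {hmn : m ≤ n} {A : Matrix (Fin m) (Fin n) ℝ} {b : Fin m → ℝ} {c : Fin n → ℝ}
  {xstar : Fin n → ℝ} {ystar : Fin m → ℝ} {sstar : Fin n → ℝ}

lemma pairNorm_sub_rev (u v : (Fin n → ℝ) × (Fin n → ℝ)) :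
    pairNorm (u - v) = pairNorm (v - u) := by
  rw [pairNorm_eq, pairNorm_eq, pairEmb_sub, pairEmb_sub, norm_sub_rev]

variable (h : UniqueOpt hmn A b c xstar ystar sstar)
include h

lemma wstar_mem {δ : ℝ} (hδ : 0 ≤ δ) : ((xstar, sstar) : (Fin n → ℝ) × (Fin n → ℝ)) ∈ Wlev A b c δ := by
  refine ⟨h.primal_feas, h.sstar_slack, ?_⟩
  rw [gap_eq h.rows_indep h.primal_feas.1 h.sstar_rep, h.comp]
  exact hδ

lemma Ddiam_le {δ : ℝ} (hδ : 0 ≤ δ) :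
    Ddiam A b c δ ≤ 2 * (PhiFactor hmn A xstar sstar * δ) := by
  apply Real.sSup_le
  · rintro d ⟨u, hu, v, hv, rfl⟩
    calc pairNorm (u - v)
        ≤ pairNorm (u - (xstar, sstar)) + pairNorm ((xstar, sstar) - v) :=
          pairNorm_triangle _ _ _
      _ = pairNorm (u - (xstar, sstar)) + pairNorm (v - (xstar, sstar)) := by
          rw [pairNorm_sub_rev (xstar, sstar) v]
      _ ≤ PhiFactor hmn A xstar sstar * δ + PhiFactor hmn A xstar sstar * δ :=
          add_le_add (pair_dist h hu) (pair_dist h hv)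
      _ = 2 * (PhiFactor hmn A xstar sstar * δ) := by ring
  · have := phiFactor_nonneg h
    positivity

lemma Ddiam_bddAbove {δ : ℝ} :
    BddAbove {d | ∃ u ∈ Wlev A b c δ, ∃ v ∈ Wlev A b c δ, d = pairNorm (u - v)} := by
  refine ⟨2 * (PhiFactor hmn A xstar sstar * δ), ?_⟩
  rintro d ⟨u, hu, v, hv, rfl⟩
  calc pairNorm (u - v)
      ≤ pairNorm (u - (xstar, sstar)) + pairNorm ((xstar, sstar) - v) :=
        pairNorm_triangle _ _ _
    _ = pairNorm (u - (xstar, sstar)) + pairNorm (v - (xstar, sstar)) := by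
        rw [pairNorm_sub_rev (xstar, sstar) v]
    _ ≤ PhiFactor hmn A xstar sstar * δ + PhiFactor hmn A xstar sstar * δ :=
        add_le_add (pair_dist h hu) (pair_dist h hv)
    _ = 2 * (PhiFactor hmn A xstar sstar * δ) := by ring

lemma Ddiam_ge {δ : ℝ} {u v : (Fin n → ℝ) × (Fin n → ℝ)}
    (hu : u ∈ Wlev A b c δ) (hv : v ∈ Wlev A b c δ) :
    pairNorm (u - v) ≤ Ddiam A b c δ :=
  le_csSup (Ddiam_bddAbove h) ⟨u, hu, v, hv, rfl⟩

lemma L_eq : l1 xstar + l1 sstar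
    = (∑ i, xstar (bIdx hmn i)) + ∑ j, sstar (nIdx hmn j) := by
  have h1 : l1 xstar = ∑ i, xstar (bIdx hmn i) := by
    rw [l1, sum_split hmn]
    rw [Finset.sum_congr (rfl : (Finset.univ : Finset (Fin (n - m))) = _)
      fun j (_ : j ∈ Finset.univ) => by rw [h.xstar_nIdx j, abs_zero]]
    rw [Finset.sum_congr (rfl : (Finset.univ : Finset (Fin m)) = _)
      fun i (_ : i ∈ Finset.univ) => abs_of_nonneg (h.xstar_nonneg _)]
    simp
  have h2 : l1 sstar = ∑ j, sstar (nIdx hmn j) := by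
    rw [l1, sum_split hmn]
    rw [Finset.sum_congr (rfl : (Finset.univ : Finset (Fin m)) = _)
      fun i (_ : i ∈ Finset.univ) => by rw [h.sstar_bIdx i, abs_zero]]
    rw [Finset.sum_congr (rfl : (Finset.univ : Finset (Fin (n - m))) = _)
      fun j (_ : j ∈ Finset.univ) => abs_of_nonneg (h.sstar_nonneg _)]
    simp
  rw [h1, h2]

lemma L_pos (hn : 0 < n) : 0 < l1 xstar + l1 sstar := by
  have : Nonempty (Fin n) := ⟨⟨0, hn⟩⟩
  have hsum : l1 xstar + l1 sstar = ∑ k, (|xstar k| + |sstar k|) := by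
    rw [l1, l1, ← Finset.sum_add_distrib]
  rw [hsum]
  apply Finset.sum_pos _ Finset.univ_nonempty
  intro k _
  by_cases hk : (k : ℕ) < m
  · have := (h.xstar_supp k).mpr hk
    have := abs_nonneg (sstar k)
    calc (0:ℝ) < xstar k := by assumption
      _ ≤ |xstar k| := le_abs_self _
      _ ≤ |xstar k| + |sstar k| := by linarith
  · have := (h.sstar_supp k).mpr (not_lt.mp hk)
    have := abs_nonneg (xstar k)
    calc (0:ℝ) < sstar k := by assumption
      _ ≤ |sstar k| := le_abs_self _
      _ ≤ |xstar k| + |sstar k| := by linarith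

lemma rrad_elt_le {δ : ℝ} (hn : 0 < n) {w : (Fin n → ℝ) × (Fin n → ℝ)}
    (hw : w ∈ Wlev A b c δ) :
    min (⨅ i, w.1 i) (⨅ i, w.2 i) * (l1 xstar + l1 sstar) ≤ δ := by
  have : Nonempty (Fin n) := ⟨⟨0, hn⟩⟩
  obtain ⟨hxf, hsf, hgap⟩ := hw
  obtain ⟨y, hy⟩ := hsf.1
  set t := min (⨅ i, w.1 i) (⨅ i, w.2 i) with ht
  have htx : ∀ k, t ≤ w.1 k := fun k =>
    le_trans (min_le_left _ _) (ciInf_le (Set.Finite.bddBelow (Set.finite_range _)) k)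
  have hts : ∀ k, t ≤ w.2 k := fun k =>
    le_trans (min_le_right _ _) (ciInf_le (Set.Finite.bddBelow (Set.finite_range _)) k)
  have hgap' : w.1 ⬝ᵥ sstar + xstar ⬝ᵥ w.2 ≤ δ := by
    rw [← h.dot_star_split hxf.1 hy, ← gap_eq h.rows_indep hxf.1 hy]
    exact hgap
  have hL : t * (l1 xstar + l1 sstar) ≤ w.1 ⬝ᵥ sstar + xstar ⬝ᵥ w.2 := by
    have e1 : l1 xstar = ∑ k, |xstar k| := rfl
    have e2 : l1 sstar = ∑ k, |sstar k| := rfl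
    have hx' : ∀ k, t * |sstar k| ≤ w.1 k * sstar k := fun k => by
      rw [abs_of_nonneg (h.sstar_nonneg k)]
      exact mul_le_mul_of_nonneg_right (htx k) (h.sstar_nonneg k)
    have hs' : ∀ k, t * |xstar k| ≤ xstar k * w.2 k := fun k => by
      rw [abs_of_nonneg (h.xstar_nonneg k)]
      rw [mul_comm (xstar k) (w.2 k)]
      exact mul_le_mul_of_nonneg_right (hts k) (h.xstar_nonneg k)
    calc t * (l1 xstar + l1 sstar)
        = (∑ k, t * |sstar k|) + ∑ k, t * |xstar k| := by
          rw [e1, e2, mul_add, Finset.mul_sum, Finset.mul_sum, add_comm]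
      _ ≤ (∑ k, w.1 k * sstar k) + ∑ k, xstar k * w.2 k :=
          add_le_add (Finset.sum_le_sum fun k _ => hx' k)
            (Finset.sum_le_sum fun k _ => hs' k)
      _ = w.1 ⬝ᵥ sstar + xstar ⬝ᵥ w.2 := rfl
  linarith

lemma rrad_le {δ : ℝ} (hn : 0 < n) (hδ : 0 ≤ δ) :
    rrad A b c δ ≤ δ / (l1 xstar + l1 sstar) := by
  have hLpos := L_pos h hn
  apply Real.sSup_le
  · rintro t ⟨w, hw, rfl⟩
    rw [le_div_iff₀ hLpos]
    exact rrad_elt_le h hn hw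
  · positivity

lemma rrad_bddAbove {δ : ℝ} (hn : 0 < n) :
    BddAbove {t | ∃ w ∈ Wlev A b c δ, t = min (⨅ i, w.1 i) (⨅ i, w.2 i)} := by
  have hLpos := L_pos h hn
  refine ⟨δ / (l1 xstar + l1 sstar), ?_⟩
  rintro t ⟨w, hw, rfl⟩
  rw [le_div_iff₀ hLpos]
  exact rrad_elt_le h hn hw

lemma rrad_ge {δ : ℝ} (hn : 0 < n) {w : (Fin n → ℝ) × (Fin n → ℝ)}
    (hw : w ∈ Wlev A b c δ) :
    min (⨅ i, w.1 i) (⨅ i, w.2 i) ≤ rrad A b c δ :=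
  le_csSup (rrad_bddAbove h hn) ⟨w, hw, rfl⟩

end DR

section Witness

variable {hmn : m ≤ n} {A : Matrix (Fin m) (Fin n) ℝ} {b : Fin m → ℝ} {c : Fin n → ℝ}
  {xstar : Fin n → ℝ} {ystar : Fin m → ℝ} {sstar : Fin n → ℝ}

lemma nonneg_of_parts {hmn : m ≤ n} (f : Fin n → ℝ)
    (hb : ∀ i, 0 ≤ f (bIdx hmn i)) (hn : ∀ j, 0 ≤ f (nIdx hmn j)) : ∀ k, 0 ≤ f k := by
  intro k
  by_cases hk : (k : ℕ) < m
  · have : bIdx hmn ⟨(k : ℕ), hk⟩ = k := by apply Fin.ext; rfl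
    rw [← this]; exact hb _
  · have hk2 : (k : ℕ) - m < n - m := by omega
    have : nIdx hmn ⟨(k : ℕ) - m, hk2⟩ = k := by apply Fin.ext; simp [nIdx]; omega
    rw [← this]; exact hn _

/-- Row sums of `B⁻¹N`. -/
def sigmaV (hmn : m ≤ n) (A : Matrix (Fin m) (Fin n) ℝ) : Fin m → ℝ :=
  BN hmn A *ᵥ (fun _ => 1)

/-- Column sums of `B⁻¹N`. -/
def tauV (hmn : m ≤ n) (A : Matrix (Fin m) (Fin n) ℝ) : Fin (n - m) → ℝ :=
  (BN hmn A)ᵀ *ᵥ (fun _ => 1)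

/-- The "conic radius" witness. -/
def wrad (hmn : m ≤ n) (A : Matrix (Fin m) (Fin n) ℝ) (xstar sstar : Fin n → ℝ) (t : ℝ) :
    (Fin n → ℝ) × (Fin n → ℝ) :=
  (glue hmn (fun i => xstar (bIdx hmn i) - t * sigmaV hmn A i) (fun _ => t),
   glue hmn (fun _ => t) (fun j => sstar (nIdx hmn j) + t * tauV hmn A j))

variable (h : UniqueOpt hmn A b c xstar ystar sstar)
include h

lemma B_mul_BN : Bmat hmn A * BN hmn A = Nmat hmn A := by
  rw [BN, ← Matrix.mul_assoc, h.B_Binv, Matrix.one_mul]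

lemma BN_transpose : (BN hmn A)ᵀ = (Nmat hmn A)ᵀ * ((Bmat hmn A)ᵀ)⁻¹ := by
  rw [BN, Matrix.transpose_mul, Matrix.transpose_nonsing_inv]

lemma B_xstar : Bmat hmn A *ᵥ (fun i => xstar (bIdx hmn i)) = b := by
  have e2 := mulVec_split hmn A xstar
  have hxN : (fun j => xstar (nIdx hmn j)) = (0 : Fin (n - m) → ℝ) :=
    funext fun j => h.xstar_nIdx j
  rw [hxN, Matrix.mulVec_zero, add_zero] at e2
  rw [← e2, h.primal_feas.1]

lemma wrad_Ax (t : ℝ) : A *ᵥ (wrad hmn A xstar sstar t).1 = b := by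
  have hsplit := mulVec_split hmn A (wrad hmn A xstar sstar t).1
  have hB : (fun i => (wrad hmn A xstar sstar t).1 (bIdx hmn i))
      = (fun i => xstar (bIdx hmn i)) - t • sigmaV hmn A := by
    funext i; simp only [wrad, glue_bIdx, Pi.sub_apply, Pi.smul_apply, smul_eq_mul]
  have hN : (fun j => (wrad hmn A xstar sstar t).1 (nIdx hmn j))
      = t • (fun _ : Fin (n - m) => (1:ℝ)) := by
    funext j; simp only [wrad, glue_nIdx, Pi.smul_apply, smul_eq_mul, mul_one]
  rw [hsplit, hB, hN, Matrix.mulVec_sub, Matrix.mulVec_smul, Matrix.mulVec_smul]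
  have hσ : Bmat hmn A *ᵥ sigmaV hmn A = Nmat hmn A *ᵥ (fun _ => 1) := by
    rw [sigmaV, Matrix.mulVec_mulVec, B_mul_BN h]
  rw [hσ, B_xstar h]
  abel

lemma wrad_slack (t : ℝ) : (wrad hmn A xstar sstar t).2
    = c + Aᵀ *ᵥ (-ystar + t • (((Bmat hmn A)ᵀ)⁻¹ *ᵥ (fun _ => 1))) := by
  set z0 : Fin m → ℝ := ((Bmat hmn A)ᵀ)⁻¹ *ᵥ (fun _ => 1) with hz0
  have hAz : Aᵀ *ᵥ (-ystar + t • z0) = Aᵀ *ᵥ (-ystar) + t • (Aᵀ *ᵥ z0) := by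
    rw [Matrix.mulVec_add, Matrix.mulVec_smul]
  have hBz : (Bmat hmn A)ᵀ *ᵥ z0 = (fun _ => 1) := by
    rw [hz0, Matrix.mulVec_mulVec, Matrix.mul_nonsing_inv _ h.BT_isUnit_det,
      Matrix.one_mulVec]
  have hNz : (Nmat hmn A)ᵀ *ᵥ z0 = tauV hmn A := by
    rw [hz0, Matrix.mulVec_mulVec, ← BN_transpose h, tauV]
  apply eq_of_parts (hmn := hmn)
  · intro i
    have hrhs : (c + Aᵀ *ᵥ (-ystar + t • z0)) (bIdx hmn i)
        = sstar (bIdx hmn i) + t * ((Bmat hmn A)ᵀ *ᵥ z0) i := by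
      rw [hAz]
      have h1 := congrFun (h.sstar_rep) (bIdx hmn i)
      have h2 := congrFun (UniqueOpt.transpose_mulVec_bIdx (hmn := hmn) (A := A) z0) i
      simp only [Pi.add_apply, Pi.smul_apply, smul_eq_mul] at h1 h2 ⊢
      rw [← h2]
      linarith [h1]
    rw [hrhs, hBz, h.sstar_bIdx i]
    simp only [wrad, glue_bIdx]
    simp
  · intro j
    have hrhs : (c + Aᵀ *ᵥ (-ystar + t • z0)) (nIdx hmn j)
        = sstar (nIdx hmn j) + t * ((Nmat hmn A)ᵀ *ᵥ z0) j := by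
      rw [hAz]
      have h1 := congrFun (h.sstar_rep) (nIdx hmn j)
      have h2 := congrFun (UniqueOpt.transpose_mulVec_nIdx (hmn := hmn) (A := A) z0) j
      simp only [Pi.add_apply, Pi.smul_apply, smul_eq_mul] at h1 h2 ⊢
      rw [← h2]
      linarith [h1]
    rw [hrhs, hNz]
    simp only [wrad, glue_nIdx]

lemma sum_sigma_eq_sum_tau :
    ∑ i, sigmaV hmn A i = ∑ j, tauV hmn A j := by
  have h1 : ∀ i, sigmaV hmn A i = ∑ j, BN hmn A i j := fun i => by
    simp [sigmaV, Matrix.mulVec, dotProduct]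
  have h2 : ∀ j, tauV hmn A j = ∑ i, BN hmn A i j := fun j => by
    simp [tauV, Matrix.mulVec, dotProduct]
  rw [Finset.sum_congr rfl fun i _ => h1 i, Finset.sum_congr rfl fun j _ => h2 j]
  exact Finset.sum_comm

lemma wrad_gap (t : ℝ) : (wrad hmn A xstar sstar t).1 ⬝ᵥ (wrad hmn A xstar sstar t).2
    = t * (l1 xstar + l1 sstar) := by
  rw [dot_split hmn]
  have hb : ∀ i : Fin m, (wrad hmn A xstar sstar t).1 (bIdx hmn i)
      * (wrad hmn A xstar sstar t).2 (bIdx hmn i)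
      = t * xstar (bIdx hmn i) - t ^ 2 * sigmaV hmn A i := by
    intro i
    simp only [wrad, glue_bIdx]
    ring
  have hnn : ∀ j : Fin (n - m), (wrad hmn A xstar sstar t).1 (nIdx hmn j)
      * (wrad hmn A xstar sstar t).2 (nIdx hmn j)
      = t * sstar (nIdx hmn j) + t ^ 2 * tauV hmn A j := by
    intro j
    simp only [wrad, glue_nIdx]
    ring
  simp only [dotProduct]
  rw [Finset.sum_congr rfl fun i _ => hb i, Finset.sum_congr rfl fun j _ => hnn j]
  rw [Finset.sum_sub_distrib, Finset.sum_add_distrib, ← Finset.mul_sum, ← Finset.mul_sum,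
    ← Finset.mul_sum, ← Finset.mul_sum, sum_sigma_eq_sum_tau h, L_eq h]
  ring

/-- Primal diameter witness direction is in the kernel. -/
lemma A_uvec (j : Fin (n - m)) : A *ᵥ uvec hmn A j = 0 := by
  have hsplit := mulVec_split hmn A (uvec hmn A j)
  have hB : (fun i => uvec hmn A j (bIdx hmn i))
      = -(BN hmn A *ᵥ (fun j' => if j' = j then 1 else 0)) := by
    funext i
    rw [uvec, glue_bIdx]
    simp only [Pi.neg_apply, Matrix.mulVec, dotProduct]
    rw [Finset.sum_congr rfl fun j' (_ : j' ∈ Finset.univ) => (by rw [mul_ite, mul_one, mul_zero] :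
      BN hmn A i j' * (if j' = j then 1 else 0) = if j' = j then BN hmn A i j' else 0)]
    rw [Finset.sum_ite_eq']
    simp
  have hN : (fun j' => uvec hmn A j (nIdx hmn j')) = (fun j' => if j' = j then 1 else 0) := by
    funext j'
    rw [uvec, glue_nIdx]
  rw [hsplit, hB, hN, Matrix.mulVec_neg, Matrix.mulVec_mulVec, B_mul_BN h]
  abel

/-- Dual diameter witness direction is in the row space. -/
lemma vvec_rep (i : Fin m) :
    vvec hmn A i = Aᵀ *ᵥ (((Bmat hmn A)ᵀ)⁻¹ *ᵥ (fun i' => if i' = i then 1 else 0)) := by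
  set z : Fin m → ℝ := ((Bmat hmn A)ᵀ)⁻¹ *ᵥ (fun i' => if i' = i then 1 else 0) with hz
  have hBz : (Bmat hmn A)ᵀ *ᵥ z = (fun i' => if i' = i then 1 else 0) := by
    rw [hz, Matrix.mulVec_mulVec, Matrix.mul_nonsing_inv _ h.BT_isUnit_det, Matrix.one_mulVec]
  have hNz : (Nmat hmn A)ᵀ *ᵥ z = fun j => BN hmn A i j := by
    rw [hz, Matrix.mulVec_mulVec, ← BN_transpose h]
    funext j
    simp only [Matrix.mulVec, dotProduct, Matrix.transpose_apply]
    rw [Finset.sum_congr rfl fun i' (_ : i' ∈ Finset.univ) => (by rw [mul_ite, mul_one, mul_zero] :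
      BN hmn A i' j * (if i' = i then 1 else 0) = if i' = i then BN hmn A i' j else 0)]
    rw [Finset.sum_ite_eq']
    simp
  apply eq_of_parts (hmn := hmn)
  · intro i'
    have h2 := congrFun (UniqueOpt.transpose_mulVec_bIdx (hmn := hmn) (A := A) z) i'
    rw [vvec, glue_bIdx, h2, hBz]
  · intro j
    have h2 := congrFun (UniqueOpt.transpose_mulVec_nIdx (hmn := hmn) (A := A) z) j
    rw [vvec, glue_nIdx, h2, hNz]

lemma uvec_dot_sstar (j : Fin (n - m)) : uvec hmn A j ⬝ᵥ sstar = sstar (nIdx hmn j) := by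
  rw [dot_sstar_eq h]
  have : ∀ j', uvec hmn A j (nIdx hmn j') * sstar (nIdx hmn j')
      = if j' = j then sstar (nIdx hmn j') else 0 := by
    intro j'
    rw [uvec, glue_nIdx, ite_mul, one_mul, zero_mul]
  rw [Finset.sum_congr rfl fun j' _ => this j', Finset.sum_ite_eq']
  simp

lemma xstar_dot_vvec (i : Fin m) : xstar ⬝ᵥ vvec hmn A i = xstar (bIdx hmn i) := by
  rw [xstar_dot_eq h]
  have : ∀ i', xstar (bIdx hmn i') * vvec hmn A i (bIdx hmn i')
      = if i' = i then xstar (bIdx hmn i') else 0 := by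
    intro i'
    rw [vvec, glue_bIdx, mul_ite, mul_one, mul_zero]
  rw [Finset.sum_congr rfl fun i' _ => this i', Finset.sum_ite_eq']
  simp

end Witness

section Eventual

open Filter Topology

variable {hmn : m ≤ n} {A : Matrix (Fin m) (Fin n) ℝ} {b : Fin m → ℝ} {c : Fin n → ℝ}
  {xstar : Fin n → ℝ} {ystar : Fin m → ℝ} {sstar : Fin n → ℝ}

lemma forall_parts {hmn : m ≤ n} {p : Fin n → Prop}
    (hb : ∀ i, p (bIdx hmn i)) (hn : ∀ j, p (nIdx hmn j)) : ∀ k, p k := by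
  intro k
  by_cases hk : (k : ℕ) < m
  · have : bIdx hmn ⟨(k : ℕ), hk⟩ = k := by apply Fin.ext; rfl
    rw [← this]; exact hb _
  · have hk2 : (k : ℕ) - m < n - m := by omega
    have : nIdx hmn ⟨(k : ℕ) - m, hk2⟩ = k := by apply Fin.ext; simp [nIdx]; omega
    rw [← this]; exact hn _

lemma ev_mul_lt (C D : ℝ) (hD : 0 < D) : ∀ᶠ δ in 𝓝[>] (0:ℝ), δ * C < D := by
  have hcont : Continuous fun δ : ℝ => δ * C := continuous_id.mul continuous_const
  have h0 : Filter.Tendsto (fun δ : ℝ => δ * C) (𝓝 0) (𝓝 0) := by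
    have := hcont.tendsto 0
    simpa using this
  exact (h0.mono_left nhdsWithin_le_nhds).eventually_lt_const hD

variable (h : UniqueOpt hmn A b c xstar ystar sstar)
include h

lemma rrad_eventually_ge (hn : 0 < n) :
    ∀ᶠ δ in 𝓝[>] (0:ℝ), δ / (l1 xstar + l1 sstar) ≤ rrad A b c δ := by
  have hne : Nonempty (Fin n) := ⟨⟨0, hn⟩⟩
  set L := l1 xstar + l1 sstar with hLdef
  have hL : 0 < L := L_pos h hn
  have ev1 : ∀ᶠ δ in 𝓝[>] (0:ℝ), ∀ i : Fin m,
      (δ / L) * (1 + sigmaV hmn A i) ≤ xstar (bIdx hmn i) := by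
    rw [eventually_all]
    intro i
    have := ev_mul_lt ((1 + sigmaV hmn A i) / L) (xstar (bIdx hmn i)) (h.xstar_bIdx_pos i)
    refine this.mono fun δ hδ => ?_
    calc (δ / L) * (1 + sigmaV hmn A i) = δ * ((1 + sigmaV hmn A i) / L) := by ring
      _ ≤ xstar (bIdx hmn i) := hδ.le
  have ev2 : ∀ᶠ δ in 𝓝[>] (0:ℝ), ∀ j : Fin (n - m),
      (δ / L) * (1 - tauV hmn A j) ≤ sstar (nIdx hmn j) := by
    rw [eventually_all]
    intro j
    have := ev_mul_lt ((1 - tauV hmn A j) / L) (sstar (nIdx hmn j)) (h.sstar_nIdx_pos j)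
    refine this.mono fun δ hδ => ?_
    calc (δ / L) * (1 - tauV hmn A j) = δ * ((1 - tauV hmn A j) / L) := by ring
      _ ≤ sstar (nIdx hmn j) := hδ.le
  filter_upwards [ev1, ev2, self_mem_nhdsWithin] with δ h1 h2 hδ
  have hδ0 : (0:ℝ) < δ := hδ
  set t := δ / L with htdef
  have ht0 : 0 < t := div_pos hδ0 hL
  set w := wrad hmn A xstar sstar t with hwdef
  -- every coordinate of w is at least t
  have hw1 : ∀ k, t ≤ w.1 k := by
    apply forall_parts (hmn := hmn) (p := fun k => t ≤ w.1 k)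
    · intro i
      have e : (wrad hmn A xstar sstar t).1 (bIdx hmn i)
          = xstar (bIdx hmn i) - t * sigmaV hmn A i := by
        simp only [wrad, glue_bIdx]
      rw [hwdef, e]
      have := h1 i
      have e2 : t * (1 + sigmaV hmn A i) = t + t * sigmaV hmn A i := by ring
      rw [htdef] at *
      linarith [this, e2]
    · intro j
      have e : (wrad hmn A xstar sstar t).1 (nIdx hmn j) = t := by
        simp only [wrad, glue_nIdx]
      rw [hwdef, e]
  have hw2 : ∀ k, t ≤ w.2 k := by
    apply forall_parts (hmn := hmn) (p := fun k => t ≤ w.2 k)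
    · intro i
      have e : (wrad hmn A xstar sstar t).2 (bIdx hmn i) = t := by
        simp only [wrad, glue_bIdx]
      rw [hwdef, e]
    · intro j
      have e : (wrad hmn A xstar sstar t).2 (nIdx hmn j)
          = sstar (nIdx hmn j) + t * tauV hmn A j := by
        simp only [wrad, glue_nIdx]
      rw [hwdef, e]
      have := h2 j
      have e2 : t * (1 - tauV hmn A j) = t - t * tauV hmn A j := by ring
      rw [htdef] at *
      linarith [this, e2]
  have hmem : w ∈ Wlev A b c δ := by
    refine ⟨⟨wrad_Ax h t, fun k => le_trans ht0.le (hw1 k)⟩,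
      ⟨⟨_, wrad_slack h t⟩, fun k => le_trans ht0.le (hw2 k)⟩, ?_⟩
    rw [gap_eq h.rows_indep (wrad_Ax h t) (wrad_slack h t), wrad_gap h t, htdef,
      div_mul_cancel₀ _ hL.ne']
  have hmin : t ≤ min (⨅ i, w.1 i) (⨅ i, w.2 i) :=
    le_min (le_ciInf fun k => hw1 k) (le_ciInf fun k => hw2 k)
  exact le_trans hmin (rrad_ge h hn hmem)

end Eventual

section Eventual2

open Filter Topology

variable {hmn : m ≤ n} {A : Matrix (Fin m) (Fin n) ℝ} {b : Fin m → ℝ} {c : Fin n → ℝ}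
  {xstar : Fin n → ℝ} {ystar : Fin m → ℝ} {sstar : Fin n → ℝ}

variable (h : UniqueOpt hmn A b c xstar ystar sstar)
include h

lemma Ddiam_nonneg {δ : ℝ} (hδ : 0 ≤ δ) : 0 ≤ Ddiam A b c δ :=
  le_trans (pairNorm_nonneg _) (Ddiam_ge h (wstar_mem h hδ) (wstar_mem h hδ))

lemma uw_mem {δ : ℝ} (hδ : 0 < δ) (j : Fin (n - m))
    (hfeas : ∀ i, 0 ≤ xstar (bIdx hmn i) - (δ / sstar (nIdx hmn j)) * BN hmn A i j) :
    ((xstar + (δ / sstar (nIdx hmn j)) • uvec hmn A j, sstar) :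
      (Fin n → ℝ) × (Fin n → ℝ)) ∈ Wlev A b c δ := by
  set a := δ / sstar (nIdx hmn j) with hadef
  have ha0 : 0 ≤ a := div_nonneg hδ.le (h.sstar_nIdx_pos j).le
  have hAx : A *ᵥ (xstar + a • uvec hmn A j) = b := by
    rw [Matrix.mulVec_add, Matrix.mulVec_smul, A_uvec h j, smul_zero, add_zero,
      h.primal_feas.1]
  refine ⟨⟨hAx, ?_⟩, h.sstar_slack, ?_⟩
  · apply forall_parts (hmn := hmn)
      (p := fun k => 0 ≤ (xstar + a • uvec hmn A j) k)
    · intro i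
      have e : (xstar + a • uvec hmn A j) (bIdx hmn i)
          = xstar (bIdx hmn i) + a * (-(BN hmn A i j)) := by
        simp only [Pi.add_apply, Pi.smul_apply, smul_eq_mul, uvec, glue_bIdx]
      rw [e]
      have := hfeas i
      linarith
    · intro j'
      have e : (xstar + a • uvec hmn A j) (nIdx hmn j')
          = a * (if j' = j then 1 else 0) := by
        simp only [Pi.add_apply, Pi.smul_apply, smul_eq_mul, uvec, glue_nIdx,
          h.xstar_nIdx j', zero_add]
      rw [e]
      by_cases hj : j' = j <;> simp [hj, ha0]
  · rw [gap_eq h.rows_indep hAx h.sstar_rep, add_dotProduct,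
      smul_dotProduct, h.comp, zero_add, uvec_dot_sstar h j, smul_eq_mul,
      hadef, div_mul_cancel₀ _ (h.sstar_nIdx_pos j).ne']

lemma vw_mem {δ : ℝ} (hδ : 0 < δ) (i : Fin m)
    (hfeas : ∀ j, 0 ≤ sstar (nIdx hmn j) + (δ / xstar (bIdx hmn i)) * BN hmn A i j) :
    ((xstar, sstar + (δ / xstar (bIdx hmn i)) • vvec hmn A i) :
      (Fin n → ℝ) × (Fin n → ℝ)) ∈ Wlev A b c δ := by
  set a := δ / xstar (bIdx hmn i) with hadef
  have ha0 : 0 ≤ a := div_nonneg hδ.le (h.xstar_bIdx_pos i).le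
  have hrep : sstar + a • vvec hmn A i
      = c + Aᵀ *ᵥ (-ystar + a • (((Bmat hmn A)ᵀ)⁻¹ *ᵥ (fun i' => if i' = i then 1 else 0))) := by
    rw [Matrix.mulVec_add, Matrix.mulVec_smul, ← vvec_rep h i, h.sstar_rep]
    abel
  refine ⟨h.primal_feas, ⟨⟨_, hrep⟩, ?_⟩, ?_⟩
  · apply forall_parts (hmn := hmn)
      (p := fun k => 0 ≤ (sstar + a • vvec hmn A i) k)
    · intro i'
      have e : (sstar + a • vvec hmn A i) (bIdx hmn i')
          = a * (if i' = i then 1 else 0) := by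
        simp only [Pi.add_apply, Pi.smul_apply, smul_eq_mul, vvec, glue_bIdx,
          h.sstar_bIdx i', zero_add]
      rw [e]
      by_cases hi : i' = i <;> simp [hi, ha0]
    · intro j
      have e : (sstar + a • vvec hmn A i) (nIdx hmn j)
          = sstar (nIdx hmn j) + a * BN hmn A i j := by
        simp only [Pi.add_apply, Pi.smul_apply, smul_eq_mul, vvec, glue_nIdx]
      rw [e]
      have := hfeas j
      linarith
  · rw [gap_eq h.rows_indep h.primal_feas.1 hrep, dotProduct_add,
      dotProduct_smul, h.comp, zero_add, xstar_dot_vvec h i, smul_eq_mul,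
      hadef, div_mul_cancel₀ _ (h.xstar_bIdx_pos i).ne']

lemma Ddiam_eventually_ge :
    ∀ᶠ δ in 𝓝[>] (0:ℝ), PhiFactor hmn A xstar sstar * δ ≤ Ddiam A b c δ := by
  have ev1 : ∀ᶠ δ in 𝓝[>] (0:ℝ), ∀ j : Fin (n - m), ∀ i : Fin m,
      0 ≤ xstar (bIdx hmn i) - (δ / sstar (nIdx hmn j)) * BN hmn A i j := by
    rw [eventually_all]
    intro j
    rw [eventually_all]
    intro i
    have := ev_mul_lt (BN hmn A i j / sstar (nIdx hmn j)) (xstar (bIdx hmn i))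
      (h.xstar_bIdx_pos i)
    refine this.mono fun δ hδ => ?_
    have e : (δ / sstar (nIdx hmn j)) * BN hmn A i j
        = δ * (BN hmn A i j / sstar (nIdx hmn j)) := by ring
    rw [e]
    linarith
  have ev2 : ∀ᶠ δ in 𝓝[>] (0:ℝ), ∀ i : Fin m, ∀ j : Fin (n - m),
      0 ≤ sstar (nIdx hmn j) + (δ / xstar (bIdx hmn i)) * BN hmn A i j := by
    rw [eventually_all]
    intro i
    rw [eventually_all]
    intro j
    have := ev_mul_lt (-(BN hmn A i j) / xstar (bIdx hmn i)) (sstar (nIdx hmn j))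
      (h.sstar_nIdx_pos j)
    refine this.mono fun δ hδ => ?_
    have e : δ * (-(BN hmn A i j) / xstar (bIdx hmn i))
        = -((δ / xstar (bIdx hmn i)) * BN hmn A i j) := by ring
    rw [e] at hδ
    linarith
  filter_upwards [ev1, ev2, self_mem_nhdsWithin] with δ h1 h2 hδ
  have hδ0 : (0:ℝ) < δ := hδ
  have hD0 : 0 ≤ Ddiam A b c δ := Ddiam_nonneg h hδ0.le
  have hM1 : M1 hmn A sstar ≤ Ddiam A b c δ / δ := by
    apply Real.iSup_le _ (div_nonneg hD0 hδ0.le)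
    intro j
    set a := δ / sstar (nIdx hmn j) with hadef
    have ha0 : 0 ≤ a := div_nonneg hδ0.le (h.sstar_nIdx_pos j).le
    have humem := uw_mem h hδ0 j (h1 j)
    set u : (Fin n → ℝ) × (Fin n → ℝ) := (xstar + a • uvec hmn A j, sstar) with hudef
    have hdist : pairNorm (u - (xstar, sstar))
        = a * Real.sqrt ((∑ i, (BN hmn A i j) ^ 2) + 1) := by
      have e : u - ((xstar, sstar) : (Fin n → ℝ) × (Fin n → ℝ))
          = (a • uvec hmn A j, (0 : Fin n → ℝ)) := by
        rw [hudef]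
        ext k
        · simp
        · simp
      rw [e, pairNorm_fst, enorm_smul, enorm_uvec, abs_of_nonneg ha0]
    have hle : a * Real.sqrt ((∑ i, (BN hmn A i j) ^ 2) + 1) ≤ Ddiam A b c δ := by
      rw [← hdist]
      exact Ddiam_ge h humem (wstar_mem h hδ0.le)
    rw [le_div_iff₀ hδ0]
    calc Real.sqrt ((∑ i, (BN hmn A i j) ^ 2) + 1) / sstar (nIdx hmn j) * δ
        = a * Real.sqrt ((∑ i, (BN hmn A i j) ^ 2) + 1) := by rw [hadef]; ring
      _ ≤ Ddiam A b c δ := hle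
  have hM2 : M2 hmn A xstar ≤ Ddiam A b c δ / δ := by
    apply Real.iSup_le _ (div_nonneg hD0 hδ0.le)
    intro i
    set a := δ / xstar (bIdx hmn i) with hadef
    have ha0 : 0 ≤ a := div_nonneg hδ0.le (h.xstar_bIdx_pos i).le
    have hvmem := vw_mem h hδ0 i (h2 i)
    set v : (Fin n → ℝ) × (Fin n → ℝ) := (xstar, sstar + a • vvec hmn A i) with hvdef
    have hdist : pairNorm (v - (xstar, sstar))
        = a * Real.sqrt ((∑ j, (BN hmn A i j) ^ 2) + 1) := by
      have e : v - ((xstar, sstar) : (Fin n → ℝ) × (Fin n → ℝ))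
          = ((0 : Fin n → ℝ), a • vvec hmn A i) := by
        rw [hvdef]
        ext k
        · simp
        · simp
      rw [e, pairNorm_snd, enorm_smul, enorm_vvec, abs_of_nonneg ha0]
    have hle : a * Real.sqrt ((∑ j, (BN hmn A i j) ^ 2) + 1) ≤ Ddiam A b c δ := by
      rw [← hdist]
      exact Ddiam_ge h hvmem (wstar_mem h hδ0.le)
    rw [le_div_iff₀ hδ0]
    calc Real.sqrt ((∑ j, (BN hmn A i j) ^ 2) + 1) / xstar (bIdx hmn i) * δ
        = a * Real.sqrt ((∑ j, (BN hmn A i j) ^ 2) + 1) := by rw [hadef]; ring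
      _ ≤ Ddiam A b c δ := hle
  have hF : PhiFactor hmn A xstar sstar ≤ Ddiam A b c δ / δ := by
    rw [phiFactor_eq]
    exact max_le hM1 hM2
  calc PhiFactor hmn A xstar sstar * δ ≤ (Ddiam A b c δ / δ) * δ :=
        mul_le_mul_of_nonneg_right hF hδ0.le
    _ = Ddiam A b c δ := div_mul_cancel₀ _ hδ0.ne'

end Eventual2

/-- Lemma 2 of the paper. Under the unique-optimum assumption, the
geometric condition number `Φ̂ = liminf_{δ→0⁺} D_δ/r_δ` satisfies `Φ ≤ Φ̂ ≤ 2Φ`. -/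
theorem phi_equiv_phiHat (m n : ℕ) (hmn : m ≤ n)
    (A : Matrix (Fin m) (Fin n) ℝ) (b : Fin m → ℝ) (c : Fin n → ℝ)
    (xstar : Fin n → ℝ) (ystar : Fin m → ℝ) (sstar : Fin n → ℝ)
    (h : UniqueOpt hmn A b c xstar ystar sstar) :
    Phi hmn A xstar sstar ≤ PhiHat A b c ∧ PhiHat A b c ≤ 2 * Phi hmn A xstar sstar := by
  by_cases hn : n = 0
  · -- degenerate case: everything is zero
    subst hn
    have hPhi : Phi hmn A xstar sstar = 0 := by
      have hl : l1 xstar + l1 sstar = 0 := by simp [l1]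
      rw [Phi, hl, zero_mul]
    have hD : ∀ δ : ℝ, 0 < δ → Ddiam A b c δ = 0 := by
      intro δ hδ
      have hset : {d | ∃ u ∈ Wlev A b c δ, ∃ v ∈ Wlev A b c δ, d = pairNorm (u - v)}
          = {(0:ℝ)} := by
        ext d
        constructor
        · rintro ⟨u, _, v, _, rfl⟩
          simp [pairNorm]
        · intro hd
          rw [Set.mem_singleton_iff] at hd
          subst hd
          refine ⟨(xstar, sstar), wstar_mem h hδ.le, (xstar, sstar), wstar_mem h hδ.le, ?_⟩
          simp [pairNorm]
      rw [Ddiam, hset, csSup_singleton]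
    have hPhiHat : PhiHat A b c = 0 := by
      rw [PhiHat]
      have hev : ∀ᶠ δ in nhdsWithin (0:ℝ) (Set.Ioi 0),
          Ddiam A b c δ / rrad A b c δ = (fun _ : ℝ => (0:ℝ)) δ := by
        filter_upwards [self_mem_nhdsWithin] with δ hδ
        rw [hD δ hδ, zero_div]
      rw [Filter.liminf_congr hev, Filter.liminf_const]
    rw [hPhi, hPhiHat]
    norm_num
  · have hn' : 0 < n := Nat.pos_of_ne_zero hn
    have hL : 0 < l1 xstar + l1 sstar := L_pos h hn'
    have hF : 0 ≤ PhiFactor hmn A xstar sstar := phiFactor_nonneg h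
    have hev : ∀ᶠ δ in nhdsWithin (0:ℝ) (Set.Ioi 0),
        Phi hmn A xstar sstar ≤ Ddiam A b c δ / rrad A b c δ ∧
        Ddiam A b c δ / rrad A b c δ ≤ 2 * Phi hmn A xstar sstar := by
      filter_upwards [rrad_eventually_ge h hn', Ddiam_eventually_ge h, self_mem_nhdsWithin]
        with δ hr hd hδ
      have hδ0 : (0:ℝ) < δ := hδ
      have hreq : rrad A b c δ = δ / (l1 xstar + l1 sstar) :=
        le_antisymm (rrad_le h hn' hδ0.le) hr
      have hDle : Ddiam A b c δ ≤ 2 * (PhiFactor hmn A xstar sstar * δ) := Ddiam_le h hδ0.le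
      constructor
      · rw [Phi, hreq, div_div_eq_mul_div, le_div_iff₀ hδ0]
        calc (l1 xstar + l1 sstar) * PhiFactor hmn A xstar sstar * δ
            = (PhiFactor hmn A xstar sstar * δ) * (l1 xstar + l1 sstar) := by ring
          _ ≤ Ddiam A b c δ * (l1 xstar + l1 sstar) :=
            mul_le_mul_of_nonneg_right hd hL.le
      · rw [Phi, hreq, div_div_eq_mul_div, div_le_iff₀ hδ0]
        calc Ddiam A b c δ * (l1 xstar + l1 sstar)
            ≤ (2 * (PhiFactor hmn A xstar sstar * δ)) * (l1 xstar + l1 sstar) :=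
              mul_le_mul_of_nonneg_right hDle hL.le
          _ = 2 * ((l1 xstar + l1 sstar) * PhiFactor hmn A xstar sstar) * δ := by ring
    constructor
    · apply Filter.le_liminf_of_le
      · exact Filter.IsBoundedUnder.isCoboundedUnder_ge
          (Filter.isBoundedUnder_of_eventually_le (hev.mono fun δ hp => hp.2))
      · exact hev.mono fun δ hp => hp.1
    · apply Filter.liminf_le_of_frequently_le
      · exact (hev.mono fun δ hp => hp.2).frequently
      · exact Filter.isBoundedUnder_of_eventually_ge (hev.mono fun δ hp => hp.1)

end LPPaper
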